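/- The equation log(c) + β·log(1−c) = log(s) + β·log(1−s) has exactly one solution c_min in the interval (0, s), and this solution satisfies 0 < c_min < 1/(1+β) < s. -/

import Mathlib

open Real

private noncomputable def Fβ (β : ℝ) (c : ℝ) : ℝ := log c + β * log (1 - c)

private lemma hasDerivFβ {β c : ℝ} (hc0 : 0 < c) (hc1 : c < 1) :
    HasDerivAt (Fβ β) (1 / c - β / (1 - c)) c := by
  have h2 : HasDerivAt (fun x : ℝ => 1 - x) (-1) c := by
    simpa using (hasDerivAt_id c).const_sub 1
  have h3 : HasDerivAt (fun x : ℝ => log (1 - x)) ((1 - c)⁻¹ * (-1)) c :=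
    (Real.hasDerivAt_log (by linarith)).comp c h2
  have h := (Real.hasDerivAt_log hc0.ne').add (h3.const_mul β)
  refine h.congr_deriv ?_
  simp only [one_div, div_eq_mul_inv]
  ring

private lemma contFβ {β c : ℝ} (hc0 : 0 < c) (hc1 : c < 1) :
    ContinuousAt (Fβ β) c := (hasDerivFβ hc0 hc1).continuousAt

private lemma monoFβ {β : ℝ} (hβ0 : 0 < β) :
    StrictMonoOn (Fβ β) (Set.Ioc 0 (1 / (1 + β))) := by
  have hm1 : 1 / (1 + β) < 1 := by
    rw [div_lt_one (by linarith)]; linarith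
  apply strictMonoOn_of_deriv_pos (convex_Ioc _ _)
  · intro x hx
    exact (contFβ hx.1 (lt_of_le_of_lt hx.2 hm1)).continuousWithinAt
  · intro x hx
    rw [interior_Ioc] at hx
    have hx0 := hx.1
    have hx1 : x < 1 := lt_trans hx.2 hm1
    rw [(hasDerivFβ hx0 hx1).deriv]
    have h1x : 0 < 1 - x := by linarith
    have hkey : x * (1 + β) < 1 := by
      have := hx.2
      rw [lt_div_iff₀ (by linarith : (0:ℝ) < 1 + β)] at this
      linarith
    rw [sub_pos, div_lt_div_iff₀ h1x hx0]
    nlinarith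

private lemma antiFβ {β s : ℝ} (hβ0 : 0 < β) (hs2 : s < 1) :
    StrictAntiOn (Fβ β) (Set.Icc (1 / (1 + β)) s) := by
  have hm0 : 0 < 1 / (1 + β) := by positivity
  apply strictAntiOn_of_deriv_neg (convex_Icc _ _)
  · intro x hx
    exact (contFβ (lt_of_lt_of_le hm0 hx.1) (lt_of_le_of_lt hx.2 hs2)).continuousWithinAt
  · intro x hx
    rw [interior_Icc] at hx
    have hx0 : 0 < x := lt_trans hm0 hx.1
    have hx1 : x < 1 := lt_trans hx.2 hs2
    have h1x : 0 < 1 - x := by linarith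
    have hkey : 1 < x * (1 + β) := by
      have := hx.1
      rw [div_lt_iff₀ (by linarith : (0:ℝ) < 1 + β)] at this
      linarith
    rw [(hasDerivFβ hx0 hx1).deriv, sub_neg, div_lt_div_iff₀ hx0 h1x]
    nlinarith

/-- Under the Samuelson condition `1/(1+β) < s < 1`, the equation
`log c + β log (1-c) = log s + β log (1-s)` has exactly one solution `c_min`
in `(0, s)`, and any such solution satisfies `c_min < 1/(1+β)`. -/
theorem stmt_4 (β s : ℝ) (hβ : β ∈ Set.Ioc (0 : ℝ) 1)
    (hs1 : 1 / (1 + β) < s) (hs2 : s < 1) :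
    (∃! c : ℝ, c ∈ Set.Ioo (0 : ℝ) s ∧
        log c + β * log (1 - c) = log s + β * log (1 - s)) ∧
    ∀ c ∈ Set.Ioo (0 : ℝ) s,
      log c + β * log (1 - c) = log s + β * log (1 - s) →
        c < 1 / (1 + β) := by
  obtain ⟨hβ0, hβ1⟩ := hβ
  set m : ℝ := 1 / (1 + β) with hm
  have hm0 : 0 < m := by positivity
  have hm1 : m < 1 := by rw [hm, div_lt_one (by linarith)]; linarith
  have hmono := monoFβ hβ0
  have hanti := antiFβ hβ0 hs2
  -- F m > F s
  have hFms : Fβ β s < Fβ β m :=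
    hanti ⟨le_refl m, hs1.le⟩ ⟨hs1.le, le_refl s⟩ hs1
  -- any solution in (0,s) lies strictly below m
  have hbelow : ∀ c ∈ Set.Ioo (0 : ℝ) s,
      log c + β * log (1 - c) = log s + β * log (1 - s) → c < m := by
    intro c hc heq
    by_contra h
    push_neg at h
    have : Fβ β s < Fβ β c := by
      rcases eq_or_lt_of_le h with h' | h'
      · rw [← h']; exact hFms
      · exact hanti ⟨h, hc.2.le⟩ ⟨hs1.le, le_refl s⟩ hc.2
    have : Fβ β c = Fβ β s := heq
    linarith
  -- existence
  have key : ∃ c ∈ Set.Ioo (0 : ℝ) s,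
      log c + β * log (1 - c) = log s + β * log (1 - s) := by
    set t : ℝ := min (exp (Fβ β s)) (m / 2) with ht
    have ht0 : 0 < t := lt_min (exp_pos _) (by linarith)
    have htm : t < m := lt_of_le_of_lt (min_le_right _ _) (by linarith)
    have ht1 : t < 1 := lt_trans htm hm1
    have hFt : Fβ β t ≤ Fβ β s := by
      have h1 : log t ≤ Fβ β s := by
        calc log t ≤ log (exp (Fβ β s)) := by
              apply Real.log_le_log ht0 (min_le_left _ _)
            _ = Fβ β s := log_exp _
      have h2 : β * log (1 - t) ≤ 0 := by
        apply mul_nonpos_of_nonneg_of_nonpos hβ0.le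
        apply Real.log_nonpos (by linarith) (by linarith)
      calc Fβ β t = log t + β * log (1 - t) := rfl
        _ ≤ Fβ β s + 0 := add_le_add h1 h2
        _ = Fβ β s := add_zero _
    have hcont : ContinuousOn (Fβ β) (Set.Icc t m) := fun x hx =>
      (contFβ (lt_of_lt_of_le ht0 hx.1) (lt_of_le_of_lt hx.2 hm1)).continuousWithinAt
    have hIVT := intermediate_value_Icc htm.le hcont
    have : Fβ β s ∈ Set.Icc (Fβ β t) (Fβ β m) := ⟨hFt, hFms.le⟩
    obtain ⟨c, hc, hFc⟩ := hIVT this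
    refine ⟨c, ⟨lt_of_lt_of_le ht0 hc.1, ?_⟩, hFc⟩
    have hcm : c < m := by
      rcases eq_or_lt_of_le hc.2 with h' | h'
      · exfalso; rw [h'] at hFc; linarith
      · exact h'
    linarith
  obtain ⟨c₀, hc₀, heq₀⟩ := key
  refine ⟨⟨c₀, ⟨hc₀, heq₀⟩, ?_⟩, hbelow⟩
  rintro c ⟨hc, heq⟩
  have hcm := hbelow c hc heq
  have hc₀m := hbelow c₀ hc₀ heq₀
  exact hmono.injOn ⟨hc.1, hcm.le⟩ ⟨hc₀.1, hc₀m.le⟩ (by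
    show Fβ β c = Fβ β c₀
    rw [show Fβ β c = _ from heq, show Fβ β c₀ = _ from heq₀])
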